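/- arXiv:0805.2231 — 3 statements merged into one kernel-verified Lean document; each statement's English description precedes it below -/
import Mathlib

section
/- Let u : ℝ≥0 → ℝ be bounded and continuous. Then for every compact interval J ⊆ [0,∞), the Poisson-weighted sums e^{-λt} ∑_{k≥0} u(k/λ) (λt)^k / k! converge to u(t) uniformly for t in J as λ → ∞. -/
open Filter Real Set

lemma tsum_exp' (x : ℝ) : ∑' k : ℕ, x ^ k / (Nat.factorial k : ℝ) = Real.exp x := by
  rw [Real.exp_eq_exp_ℝ, NormedSpace.exp_eq_tsum_div]

lemma shift1 (x : ℝ) : (fun k : ℕ => ((k + 1 : ℕ) : ℝ) * (x ^ (k + 1) / (Nat.factorial (k + 1) : ℝ)))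
      = fun k : ℕ => x * (x ^ k / (Nat.factorial k : ℝ)) := by
  funext k
  rw [Nat.factorial_succ]
  push_cast
  field_simp
  ring

lemma summable1 (x : ℝ) : Summable (fun k : ℕ => (k : ℝ) * (x ^ k / (Nat.factorial k : ℝ))) := by
  rw [← summable_nat_add_iff 1, shift1]
  exact (Real.summable_pow_div_factorial x).mul_left x

lemma tsum1 (x : ℝ) : ∑' k : ℕ, (k : ℝ) * (x ^ k / (Nat.factorial k : ℝ)) = x * Real.exp x := by
  rw [Summable.tsum_eq_zero_add (summable1 x)]
  simp only [Nat.cast_zero, zero_mul, zero_add]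
  rw [shift1, tsum_mul_left, tsum_exp']

lemma shift2 (x : ℝ) : (fun k : ℕ => ((k + 2 : ℕ) : ℝ) * (((k + 2 : ℕ) : ℝ) - 1) * (x ^ (k + 2) / (Nat.factorial (k + 2) : ℝ)))
      = fun k : ℕ => x ^ 2 * (x ^ k / (Nat.factorial k : ℝ)) := by
  funext k
  rw [show k + 2 = (k + 1) + 1 from rfl, Nat.factorial_succ, Nat.factorial_succ]
  push_cast
  field_simp
  ring

lemma summable2 (x : ℝ) : Summable (fun k : ℕ => (k : ℝ) * ((k : ℝ) - 1) * (x ^ k / (Nat.factorial k : ℝ))) := by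
  rw [← summable_nat_add_iff 2]
  have := shift2 x
  simp only [Nat.cast_add, Nat.cast_ofNat] at this ⊢
  rw [this]
  exact (Real.summable_pow_div_factorial x).mul_left _

lemma tsum2 (x : ℝ) : ∑' k : ℕ, (k : ℝ) * ((k : ℝ) - 1) * (x ^ k / (Nat.factorial k : ℝ)) = x ^ 2 * Real.exp x := by
  rw [Summable.tsum_eq_zero_add (summable2 x), Summable.tsum_eq_zero_add ((summable_nat_add_iff 1).mpr (summable2 x))]
  have h2 : (fun n : ℕ => ((n + 1 + 1 : ℕ) : ℝ) * (((n + 1 + 1 : ℕ) : ℝ) - 1) * (x ^ (n + 1 + 1) / (Nat.factorial (n + 1 + 1) : ℝ)))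
      = fun n : ℕ => x ^ 2 * (x ^ n / (Nat.factorial n : ℝ)) := shift2 x
  rw [h2, tsum_mul_left, tsum_exp']
  norm_num

lemma eq_decomp (x : ℝ) (k : ℕ) : ((k : ℝ) - x) ^ 2 * (x ^ k / (Nat.factorial k : ℝ))
    = (k : ℝ) * ((k : ℝ) - 1) * (x ^ k / (Nat.factorial k : ℝ))
      + (1 - 2 * x) * ((k : ℝ) * (x ^ k / (Nat.factorial k : ℝ)))
      + x ^ 2 * (x ^ k / (Nat.factorial k : ℝ)) := by ring

lemma summable_var (x : ℝ) : Summable (fun k : ℕ => ((k : ℝ) - x) ^ 2 * (x ^ k / (Nat.factorial k : ℝ))) := by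
  simp only [eq_decomp]
  exact ((summable2 x).add (((summable1 x)).mul_left _)).add ((Real.summable_pow_div_factorial x).mul_left _)

lemma tsum_var (x : ℝ) : ∑' k : ℕ, ((k : ℝ) - x) ^ 2 * (x ^ k / (Nat.factorial k : ℝ)) = x * Real.exp x := by
  simp only [eq_decomp]
  rw [Summable.tsum_add ((summable2 x).add (((summable1 x)).mul_left _)) ((Real.summable_pow_div_factorial x).mul_left _),
    Summable.tsum_add (summable2 x) ((summable1 x).mul_left _), tsum_mul_left, tsum_mul_left, tsum1, tsum2, tsum_exp']
  ring

/-- Hille/Feller theorem on Poisson smoothing: for a bounded continuous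
`u : [0,∞) → ℝ`, the Poisson-weighted sums converge to `u` uniformly on
any compact interval `[a,b] ⊆ [0,∞)` as `λ → ∞`. -/
theorem stmt_0 (u : ℝ → ℝ) (hbdd : ∃ C : ℝ, ∀ t : ℝ, 0 ≤ t → |u t| ≤ C)
    (hcont : ContinuousOn u (Set.Ici 0)) (a b : ℝ) (ha : 0 ≤ a) :
    TendstoUniformlyOn
      (fun (lam : ℝ) (t : ℝ) =>
        ∑' k : ℕ, u ((k : ℝ) / lam) * (Real.exp (-(lam * t)) * (lam * t) ^ k / (Nat.factorial k : ℝ)))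
      u Filter.atTop (Set.Icc a b) := by
  rw [Metric.tendstoUniformlyOn_iff]
  intro ε hε
  obtain ⟨C0, hC0⟩ := hbdd
  set C := max C0 0 with hCdef
  have hCnn : 0 ≤ C := le_max_right _ _
  have hC : ∀ t : ℝ, 0 ≤ t → |u t| ≤ C := fun t ht => (hC0 t ht).trans (le_max_left _ _)
  have hucont : UniformContinuousOn u (Set.Icc (0:ℝ) (b+1)) :=
    isCompact_Icc.uniformContinuousOn_of_continuous
      (hcont.mono (fun z hz => hz.1))
  rw [Metric.uniformContinuousOn_iff] at hucont
  obtain ⟨δ0, hδ0, hδ⟩ := hucont (ε/2) (half_pos hε)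
  set δ := min δ0 1 with hδdef
  have hδpos : 0 < δ := lt_min hδ0 one_pos
  have hδ1 : δ ≤ 1 := min_le_right _ _
  have hδδ0 : δ ≤ δ0 := min_le_left _ _
  set K := 2 * C * (|b| + 1) / δ ^ 2 with hKdef
  have hKlim : Tendsto (fun lam : ℝ => K / lam) atTop (nhds 0) :=
    tendsto_const_nhds.div_atTop tendsto_id
  filter_upwards [eventually_ge_atTop (1:ℝ), hKlim.eventually_lt_const (half_pos hε)]
    with lam hlam1 hKlam t ht
  have hlam : (0:ℝ) < lam := lt_of_lt_of_le one_pos hlam1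
  have ht0 : 0 ≤ t := ha.trans ht.1
  set x := lam * t with hxdef
  have hx0 : 0 ≤ x := mul_nonneg hlam.le ht0
  set c := 2 * C / (lam * δ) ^ 2 with hcdef
  have hcnn : 0 ≤ c := by
    apply div_nonneg (by linarith)
    positivity
  set w : ℕ → ℝ := fun k => Real.exp (-x) * (x ^ k / (Nat.factorial k : ℝ)) with hwdef
  have hw_nn : ∀ k, 0 ≤ w k := fun k => by
    rw [hwdef]
    positivity
  have hw_sum : Summable w := (Real.summable_pow_div_factorial x).mul_left _
  have hw_tsum : ∑' k : ℕ, w k = 1 := by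
    rw [hwdef, tsum_mul_left, tsum_exp', ← Real.exp_add]
    simp
  have hUsum : Summable (fun k : ℕ => u ((k:ℝ)/lam) * w k) := by
    apply Summable.of_norm_bounded (hw_sum.mul_left C)
    intro k
    rw [Real.norm_eq_abs, abs_mul, abs_of_nonneg (hw_nn k)]
    exact mul_le_mul_of_nonneg_right (hC _ (div_nonneg (Nat.cast_nonneg k) hlam.le)) (hw_nn k)
  have hvar_sum : Summable (fun k : ℕ => ((k:ℝ) - x)^2 * w k) := by
    have h := (summable_var x).mul_left (Real.exp (-x))
    apply h.congr
    intro k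
    rw [hwdef]
    ring
  have hvar_tsum : ∑' k : ℕ, ((k:ℝ) - x)^2 * w k = x := by
    have h : (fun k : ℕ => ((k:ℝ) - x)^2 * w k)
        = fun k : ℕ => Real.exp (-x) * (((k:ℝ)-x)^2 * (x^k / (Nat.factorial k : ℝ))) := by
      funext k; rw [hwdef]; ring
    rw [h, tsum_mul_left, tsum_var, ← mul_assoc, mul_comm (Real.exp (-x)) x, mul_assoc,
      ← Real.exp_add]
    simp
  -- rewrite the goal
  rw [Real.dist_eq, abs_sub_comm]
  have hFt : (∑' k : ℕ, u ((k:ℝ)/lam) * (Real.exp (-x) * x^k / (Nat.factorial k : ℝ)))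
      = ∑' k : ℕ, u ((k:ℝ)/lam) * w k := by
    congr 1
    funext k
    rw [hwdef]
    ring
  rw [hFt]
  have hdiff : (∑' k : ℕ, u ((k:ℝ)/lam) * w k) - u t
      = ∑' k : ℕ, (u ((k:ℝ)/lam) - u t) * w k := by
    rw [show (fun k : ℕ => (u ((k:ℝ)/lam) - u t) * w k)
        = fun k : ℕ => u ((k:ℝ)/lam) * w k - u t * w k from funext fun k => by ring,
      Summable.tsum_sub hUsum (hw_sum.mul_left (u t)), tsum_mul_left, hw_tsum, mul_one]
  rw [hdiff]
  have hdsum : Summable (fun k : ℕ => (u ((k:ℝ)/lam) - u t) * w k) := by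
    have h := hUsum.sub (hw_sum.mul_left (u t))
    apply h.congr
    intro k
    ring
  -- pointwise bound
  have hkx : ∀ k : ℕ, (k:ℝ) - x = lam * ((k:ℝ)/lam - t) := by
    intro k
    rw [hxdef]
    field_simp
  have hpt : ∀ k : ℕ, |u ((k:ℝ)/lam) - u t| ≤ ε/2 + c * ((k:ℝ) - x)^2 := by
    intro k
    have hknn : (0:ℝ) ≤ (k:ℝ)/lam := div_nonneg (Nat.cast_nonneg k) hlam.le
    by_cases hnear : |(k:ℝ)/lam - t| < δ
    · have habs := abs_lt.mp hnear
      have h1 : (k:ℝ)/lam ∈ Set.Icc (0:ℝ) (b+1) :=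
        ⟨hknn, by nlinarith [ht.2]⟩
      have h2 : t ∈ Set.Icc (0:ℝ) (b+1) := ⟨ht0, by linarith [ht.2]⟩
      have h3 := hδ _ h1 _ h2 (by rw [Real.dist_eq]; exact lt_of_lt_of_le hnear hδδ0)
      rw [Real.dist_eq] at h3
      nlinarith [sq_nonneg ((k:ℝ) - x), mul_nonneg hcnn (sq_nonneg ((k:ℝ) - x))]
    · push_neg at hnear
      have habs : |u ((k:ℝ)/lam) - u t| ≤ 2*C := by
        calc |u ((k:ℝ)/lam) - u t| ≤ |u ((k:ℝ)/lam)| + |u t| := abs_sub _ _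
          _ ≤ C + C := add_le_add (hC _ hknn) (hC _ ht0)
          _ = 2*C := by ring
      have hsq : (lam*δ)^2 ≤ ((k:ℝ) - x)^2 := by
        rw [hkx k]
        rw [mul_pow, mul_pow]
        have h1 : δ^2 ≤ ((k:ℝ)/lam - t)^2 := by
          rw [← sq_abs ((k:ℝ)/lam - t)]
          exact pow_le_pow_left₀ hδpos.le hnear 2
        exact mul_le_mul_of_nonneg_left h1 (sq_nonneg lam)
      have h2 : c * (lam*δ)^2 ≤ c * ((k:ℝ)-x)^2 := mul_le_mul_of_nonneg_left hsq hcnn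
      have h3 : c * (lam*δ)^2 = 2*C := by
        rw [hcdef]
        field_simp
      linarith [half_pos hε]
  calc |∑' k : ℕ, (u ((k:ℝ)/lam) - u t) * w k|
      ≤ ∑' k : ℕ, |(u ((k:ℝ)/lam) - u t) * w k| := by
        have h := norm_tsum_le_tsum_norm (f := fun k : ℕ => (u ((k:ℝ)/lam) - u t) * w k)
          (by simpa only [Real.norm_eq_abs] using hdsum.abs)
        simpa only [Real.norm_eq_abs] using h
    _ ≤ ∑' k : ℕ, (ε/2 + c * ((k:ℝ) - x)^2) * w k := by
        apply Summable.tsum_le_tsum _ hdsum.abs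
        · apply Summable.congr (((hw_sum.mul_left (ε/2))).add (hvar_sum.mul_left c))
          intro k
          ring
        · intro k
          rw [abs_mul, abs_of_nonneg (hw_nn k)]
          exact mul_le_mul_of_nonneg_right (hpt k) (hw_nn k)
    _ = ε/2 + c * x := by
        rw [show (fun k : ℕ => (ε/2 + c * ((k:ℝ) - x)^2) * w k)
            = fun k : ℕ => (ε/2) * w k + c * (((k:ℝ)-x)^2 * w k) from funext fun k => by ring,
          Summable.tsum_add (hw_sum.mul_left _) (hvar_sum.mul_left _), tsum_mul_left, hw_tsum, mul_one,
          tsum_mul_left, hvar_tsum]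
    _ ≤ ε/2 + K/lam := by
        have hcx : c * x = 2*C*t/δ^2/lam := by
          rw [hcdef, hxdef]
          field_simp
        have htb : t ≤ |b| + 1 := le_trans ht.2 (by linarith [le_abs_self b])
        have h2 : 2*C*t/δ^2/lam ≤ K/lam := by
          rw [hKdef]
          gcongr
        linarith [h2, hcx]
    _ < ε/2 + ε/2 := by linarith
    _ = ε := add_halves ε
end

section
/- Let T be a nonnegative integrable random variable with survival function S, and fix t ≥ 0 with S(t) > 0. Then the variance of the random variable ((T−t)·1{T>t} − m(t)·1{T>t})/S(t), where m(t) = ∫_t^∞ S(u)du / S(t), equals Var(T − t | T > t)/S(t). -/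
open MeasureTheory ProbabilityTheory Real Set

/-- Variance computation of Remark 3.1: the variance of
`((T−t)·1{T>t} − m(t)·1{T>t})/S(t)` equals `Var(T−t | T>t)/S(t)`,
where `m(t) = ∫_t^∞ S(u)du / S(t)` and
`Var(T−t | T>t) = E((T−t)² | T>t) − m(t)²`. -/
theorem stmt_7 {Ω : Type*} [MeasureTheory.MeasureSpace Ω]
    [MeasureTheory.IsProbabilityMeasure (ℙ : MeasureTheory.Measure Ω)]
    (T : Ω → ℝ) (hTm : Measurable T) (hT0 : ∀ ω, 0 ≤ T ω)
    (hTint : MeasureTheory.Integrable T)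
    (hTsq : MeasureTheory.Integrable (fun ω => (T ω) ^ 2))
    (S : ℝ → ℝ) (hS : ∀ s : ℝ, S s = (ℙ {ω | s < T ω}).toReal)
    (t : ℝ) (ht : 0 ≤ t) (hSt : 0 < S t)
    (m : ℝ) (hm : m = (∫ u in Set.Ioi t, S u) / S t) :
    ProbabilityTheory.variance
      (fun ω => ((T ω - t) * Set.indicator {ω | t < T ω} (fun _ => (1 : ℝ)) ω
          - m * Set.indicator {ω | t < T ω} (fun _ => (1 : ℝ)) ω) / S t) ℙ
      = ((∫ ω in {ω | t < T ω}, (T ω - t) ^ 2) / S t - m ^ 2) / S t := by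
  set A : Set Ω := {ω | t < T ω} with hA_def
  have hA : MeasurableSet A := measurableSet_lt measurable_const hTm
  set p : ℝ := S t with hp_def
  have hp : p = (ℙ A).toReal := hS t
  have hp0 : p ≠ 0 := ne_of_gt hSt
  -- Y = (T - t) * indicator
  set Y : Ω → ℝ := fun ω => A.indicator (fun ω => T ω - t) ω with hY_def
  have hYeq : ∀ ω, (T ω - t) * A.indicator (fun _ => (1 : ℝ)) ω = Y ω := by
    intro ω
    by_cases h : ω ∈ A <;> simp [Y, Set.indicator_of_mem, Set.indicator_of_notMem, h]
  have hYint : Integrable Y := ((hTint.sub (integrable_const t)).indicator hA)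
  have hYnn : ∀ ω, 0 ≤ Y ω := by
    intro ω
    by_cases h : ω ∈ A
    · simp only [Y, Set.indicator_of_mem h]
      have : t < T ω := h
      linarith
    · simp [Y, Set.indicator_of_notMem h]
  -- Step 1: ∫ Y = ∫_{Ioi t} S
  have hE1 : ∫ ω, Y ω = ∫ u in Set.Ioi t, S u := by
    rw [hYint.integral_eq_integral_meas_lt (Filter.Eventually.of_forall hYnn)]
    have hset : ∀ u : ℝ, 0 < u → {ω | u < Y ω} = {ω | u + t < T ω} := by
      intro u hu
      ext ω
      simp only [Set.mem_setOf_eq]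
      constructor
      · intro h
        by_cases hω : ω ∈ A
        · simp only [Y, Set.indicator_of_mem hω] at h; linarith
        · simp [Y, Set.indicator_of_notMem hω] at h; linarith
      · intro h
        have hω : ω ∈ A := by simp only [hA_def, Set.mem_setOf_eq]; linarith
        simp only [Y, Set.indicator_of_mem hω]; linarith
    have h1 : ∫ u in Set.Ioi (0:ℝ), (ℙ {ω | u < Y ω}).toReal
        = ∫ u in Set.Ioi (0:ℝ), S (u + t) := by
      apply setIntegral_congr_fun measurableSet_Ioi
      intro u hu
      dsimp only
      rw [hset u hu, hS (u + t)]
    simp only [measureReal_def]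
    rw [h1]
    have hmp : MeasurePreserving (· + t) (volume : Measure ℝ) volume :=
      measurePreserving_add_right volume t
    have hemb : MeasurableEmbedding (· + t : ℝ → ℝ) :=
      (MeasurableEquiv.addRight t).measurableEmbedding
    have hpre : ((· + t) : ℝ → ℝ) ⁻¹' Set.Ioi t = Set.Ioi 0 := by
      ext x; simp
    have := hmp.setIntegral_preimage_emb hemb S (Set.Ioi t)
    rw [hpre] at this
    exact this
  -- Hence ∫_A (T - t) = m * p
  have hE1' : ∫ ω in A, (T ω - t) = m * p := by
    rw [← integral_indicator hA]
    have : ∫ ω, A.indicator (fun ω => T ω - t) ω = ∫ u in Set.Ioi t, S u := hE1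
    rw [this, hm]
    field_simp
  -- MemLp facts
  have hT2 : MemLp T 2 ℙ := by
    rw [memLp_two_iff_integrable_sq hTm.aestronglyMeasurable]
    exact hTsq
  have hYmem : MemLp Y 2 ℙ := (hT2.sub (memLp_const t)).indicator hA
  have hIndmem : MemLp (fun ω => A.indicator (fun _ => (m : ℝ)) ω) 2 ℙ :=
    MemLp.indicator hA (memLp_const m)
  have hXmem : MemLp (fun ω => ((T ω - t) * A.indicator (fun _ => (1 : ℝ)) ω
      - m * A.indicator (fun _ => (1 : ℝ)) ω) / p) 2 ℙ := by
    have heq : (fun ω => ((T ω - t) * A.indicator (fun _ => (1 : ℝ)) ω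
        - m * A.indicator (fun _ => (1 : ℝ)) ω) / p)
        = fun ω => (1 / p) * (Y ω - A.indicator (fun _ => (m : ℝ)) ω) := by
      funext ω
      rw [← hYeq ω]
      by_cases h : ω ∈ A <;>
        simp [Set.indicator_of_mem, Set.indicator_of_notMem, h] <;> ring
    rw [heq]
    exact (hYmem.sub hIndmem).const_mul _
  -- integrability of pieces
  have hYint2 : Integrable (fun ω => Y ω) := hYint
  have hIndint : Integrable (fun ω => A.indicator (fun _ => (m : ℝ)) ω) :=
    (integrable_const m).indicator hA
  have hsqTt : Integrable (fun ω => (T ω - t) ^ 2) := by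
    have heq : (fun ω => (T ω - t) ^ 2) = fun ω => T ω ^ 2 - (2 * t) * T ω + t ^ 2 := by
      funext ω; ring
    rw [heq]
    exact (hTsq.sub (hTint.const_mul _)).add (integrable_const _)
  -- variance via variance_def'
  rw [variance_eq_sub hXmem]
  -- compute mean
  have hmean : (∫ ω, ((T ω - t) * A.indicator (fun _ => (1 : ℝ)) ω
      - m * A.indicator (fun _ => (1 : ℝ)) ω) / p) = 0 := by
    have heq : (fun ω => ((T ω - t) * A.indicator (fun _ => (1 : ℝ)) ω
        - m * A.indicator (fun _ => (1 : ℝ)) ω) / p)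
        = fun ω => (1 / p) * (Y ω - A.indicator (fun _ => (m : ℝ)) ω) := by
      funext ω
      rw [← hYeq ω]
      by_cases h : ω ∈ A <;>
        simp [Set.indicator_of_mem, Set.indicator_of_notMem, h] <;> ring
    rw [heq, integral_const_mul, integral_sub hYint2 hIndint]
    rw [hE1, integral_indicator hA, setIntegral_const, smul_eq_mul]
    rw [measureReal_def, ← hp, hm]
    field_simp
    ring
  -- compute second moment
  have hsq : (∫ ω, (((T ω - t) * A.indicator (fun _ => (1 : ℝ)) ω
      - m * A.indicator (fun _ => (1 : ℝ)) ω) / p) ^ 2)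
      = ((∫ ω in A, (T ω - t) ^ 2) - m ^ 2 * p) / p ^ 2 := by
    have heq : (fun ω => (((T ω - t) * A.indicator (fun _ => (1 : ℝ)) ω
        - m * A.indicator (fun _ => (1 : ℝ)) ω) / p) ^ 2)
        = fun ω => (1 / p ^ 2) * (A.indicator (fun ω => (T ω - t) ^ 2) ω
            - (2 * m) * A.indicator (fun ω => T ω - t) ω
            + A.indicator (fun _ => (m ^ 2 : ℝ)) ω) := by
      funext ω
      by_cases h : ω ∈ A
      · simp only [Set.indicator_of_mem h]
        field_simp
        ring
      · simp [Set.indicator_of_notMem h]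
    rw [heq, integral_const_mul]
    have hi1 : Integrable (fun ω => A.indicator (fun ω => (T ω - t) ^ 2) ω) :=
      hsqTt.indicator hA
    have hi2 : Integrable (fun ω => (2 * m) * A.indicator (fun ω => T ω - t) ω) :=
      ((hTint.sub (integrable_const t)).indicator hA).const_mul _
    have hi3 : Integrable (fun ω => A.indicator (fun _ => (m ^ 2 : ℝ)) ω) :=
      (integrable_const _).indicator hA
    have hi12 : Integrable (fun ω => A.indicator (fun ω => (T ω - t) ^ 2) ω
        - (2 * m) * A.indicator (fun ω => T ω - t) ω) := hi1.sub hi2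
    rw [integral_add hi12 hi3, integral_sub hi1 hi2, integral_const_mul,
      integral_indicator hA, integral_indicator hA, integral_indicator hA]
    simp only [setIntegral_const, smul_eq_mul]
    rw [measureReal_def, ← hp, hE1']
    field_simp
    ring
  simp only [Pi.pow_apply]
  rw [hsq, hmean]
  field_simp
  ring
end

section
/- For fixed t ≥ 0 and x ≥ 0 with x ≠ t, φ^A_{λ,t}(x) := E[((⌊λx⌋ − N_λ + 1)/λ) · 1{N_λ < λx}] → (x − t)·1{x > t} as λ → ∞, where N_λ ~ Poisson(tλ). -/
open Filter Real
set_option maxHeartbeats 1000000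


noncomputable def pp (μ : ℝ) (k : ℕ) : ℝ := Real.exp (-μ) * μ ^ k / (Nat.factorial k : ℝ)

lemma pp_nonneg {μ : ℝ} (hμ : 0 ≤ μ) (k : ℕ) : 0 ≤ pp μ k := by
  apply div_nonneg (mul_nonneg (Real.exp_nonneg _) (pow_nonneg hμ _))
  positivity

lemma hs_exp (μ : ℝ) : HasSum (fun k : ℕ => μ ^ k / (Nat.factorial k : ℝ)) (Real.exp μ) := by
  rw [Real.exp_eq_exp_ℝ]
  exact NormedSpace.expSeries_div_hasSum_exp μ

lemma hs_pp (μ : ℝ) : HasSum (pp μ) 1 := by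
  have := (hs_exp μ).mul_left (Real.exp (-μ))
  simp only [← mul_div_assoc] at this
  simp [← Real.exp_add] at this; exact this

lemma pp_succ (μ : ℝ) (k : ℕ) : ((k:ℝ)+1) * pp μ (k+1) = μ * pp μ k := by
  simp only [pp, Nat.factorial_succ, pow_succ]
  have : (Nat.factorial k : ℝ) ≠ 0 := Nat.cast_ne_zero.mpr (Nat.factorial_ne_zero k)
  push_cast
  field_simp

lemma hs_pp_mul (μ : ℝ) : HasSum (fun k : ℕ => (k : ℝ) * pp μ k) μ := by
  set f : ℕ → ℝ := fun k => (k : ℝ) * pp μ k with hf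
  have h : HasSum (fun k : ℕ => f (k+1)) μ := by
    have e : (fun k : ℕ => f (k+1)) = fun k : ℕ => μ * pp μ k := by
      funext k; simp only [hf]; push_cast; exact pp_succ μ k
    rw [e]; simpa using (hs_pp μ).mul_left μ
  have := (hasSum_nat_add_iff (f := f) 1).mp h
  simpa [hf] using this

lemma hs_pp_mul2 (μ : ℝ) : HasSum (fun k : ℕ => (k : ℝ) * ((k : ℝ) - 1) * pp μ k) (μ^2) := by
  set f : ℕ → ℝ := fun k => (k : ℝ) * ((k : ℝ) - 1) * pp μ k with hf
  have h : HasSum (fun k : ℕ => f (k+2)) (μ^2) := by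
    have e : (fun k : ℕ => f (k+2)) = fun k : ℕ => μ^2 * pp μ k := by
      funext k
      simp only [hf]
      push_cast
      have h1 : ((k:ℝ)+1+1) * pp μ (k+1+1) = μ * pp μ (k+1) := by
        have := pp_succ μ (k+1); push_cast at this; convert this using 2 <;> push_cast <;> ring
      have h2 := pp_succ μ k
      have e2 : k + 2 = k + 1 + 1 := rfl
      rw [e2]
      linear_combination ((k:ℝ)+1) * h1 + μ * h2
    rw [e]; simpa using (hs_pp μ).mul_left (μ^2)
  have := (hasSum_nat_add_iff (f := f) 2).mp h
  simpa [hf, Finset.sum_range_succ] using this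

lemma hs_pp_var (μ : ℝ) : HasSum (fun k : ℕ => ((k : ℝ) - μ)^2 * pp μ k) μ := by
  have h := ((hs_pp_mul2 μ).add ((hs_pp_mul μ).mul_left (1 - 2*μ))).add ((hs_pp μ).mul_left (μ^2))
  have e : (fun k : ℕ => ((k:ℝ) * ((k:ℝ)-1) * pp μ k + (1-2*μ) * ((k:ℝ) * pp μ k)) + μ^2 * pp μ k)
      = fun k : ℕ => ((k : ℝ) - μ)^2 * pp μ k := by
    funext k; ring
  rw [e] at h
  convert h using 1
  ring



lemma cdf_le_one {μ : ℝ} (hμ : 0 ≤ μ) (n : ℕ) : ∑ k ∈ Finset.range n, pp μ k ≤ 1 := by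
  have := Summable.sum_le_tsum (Finset.range n) (fun k _ => pp_nonneg hμ k) (hs_pp μ).summable
  rwa [(hs_pp μ).tsum_eq] at this

lemma head_bound {μ d : ℝ} (hμ : 0 ≤ μ) (hd : 0 < d) (n : ℕ)
    (h : ∀ k ∈ Finset.range n, (k : ℝ) ≤ μ - d) :
    ∑ k ∈ Finset.range n, pp μ k ≤ μ / d^2 := by
  have step : ∀ k ∈ Finset.range n, pp μ k ≤ (((k:ℝ) - μ)^2 / d^2) * pp μ k := by
    intro k hk
    have hk' := h k hk
    have h2 : d^2 ≤ ((k:ℝ) - μ)^2 := by nlinarith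
    have h1 : (1:ℝ) ≤ ((k:ℝ) - μ)^2 / d^2 := (one_le_div (by positivity)).mpr h2
    exact le_mul_of_one_le_left (pp_nonneg hμ k) h1
  calc ∑ k ∈ Finset.range n, pp μ k ≤ ∑ k ∈ Finset.range n, (((k:ℝ) - μ)^2 / d^2) * pp μ k :=
        Finset.sum_le_sum step
    _ = (1/d^2) * ∑ k ∈ Finset.range n, ((k:ℝ) - μ)^2 * pp μ k := by
        rw [Finset.mul_sum]; apply Finset.sum_congr rfl; intro k _; ring
    _ ≤ (1/d^2) * μ := by
        apply mul_le_mul_of_nonneg_left _ (by positivity)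
        have := Summable.sum_le_tsum (Finset.range n)
          (fun k _ => mul_nonneg (sq_nonneg _) (pp_nonneg hμ k)) (hs_pp_var μ).summable
        rwa [(hs_pp_var μ).tsum_eq] at this
    _ = μ / d^2 := by ring

lemma tail_bound {μ d : ℝ} (hμ : 0 ≤ μ) (hd : 0 < d) (n : ℕ) (h : μ + d ≤ (n : ℝ)) :
    1 - ∑ k ∈ Finset.range n, pp μ k ≤ μ / d^2 := by
  have hsum := (hs_pp μ).summable
  have hsplit := Summable.sum_add_tsum_nat_add (f := pp μ) n hsum
  rw [(hs_pp μ).tsum_eq] at hsplit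
  have htail : 1 - ∑ k ∈ Finset.range n, pp μ k = ∑' i : ℕ, pp μ (i + n) := by linarith
  rw [htail]
  have hsv := (hs_pp_var μ).summable
  have hsv' : Summable (fun i : ℕ => (((i+n : ℕ):ℝ) - μ)^2 * pp μ (i + n)) :=
    (summable_nat_add_iff n).mpr hsv
  have hsum' : Summable (fun i : ℕ => pp μ (i + n)) := (summable_nat_add_iff n).mpr hsum
  calc ∑' i : ℕ, pp μ (i + n)
      ≤ ∑' i : ℕ, ((((i+n : ℕ):ℝ) - μ)^2 / d^2) * pp μ (i + n) := by
        have hsv2 : Summable (fun i : ℕ => ((((i+n:ℕ):ℝ) - μ)^2 / d^2) * pp μ (i+n)) := by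
          refine (hsv'.div_const (d^2)).congr fun i => ?_
          ring
        apply Summable.tsum_le_tsum _ hsum' hsv2
        intro i
        have hin : μ + d ≤ ((i + n : ℕ) : ℝ) :=
          le_trans h (Nat.cast_le.mpr (Nat.le_add_left n i))
        have h2 : d^2 ≤ (((i+n:ℕ):ℝ) - μ)^2 := by
          have hdc : d ≤ ((i+n:ℕ):ℝ) - μ := by linarith
          exact pow_le_pow_left₀ hd.le hdc 2
        have h1 : (1:ℝ) ≤ ((((i+n:ℕ):ℝ) - μ)^2) / d^2 := (one_le_div (by positivity)).mpr h2
        exact le_mul_of_one_le_left (pp_nonneg hμ (i+n)) h1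
    _ = (1/d^2) * ∑' i : ℕ, (((i+n:ℕ):ℝ) - μ)^2 * pp μ (i + n) := by
        rw [← tsum_mul_left]; apply tsum_congr; intro i; ring
    _ ≤ (1/d^2) * μ := by
        apply mul_le_mul_of_nonneg_left _ (by positivity)
        have hle := Summable.sum_add_tsum_nat_add (f := fun k : ℕ => ((k:ℝ) - μ)^2 * pp μ k) n hsv
        rw [(hs_pp_var μ).tsum_eq] at hle
        have hnn : 0 ≤ ∑ k ∈ Finset.range n, ((k:ℝ) - μ)^2 * pp μ k :=
          Finset.sum_nonneg fun k _ => mul_nonneg (sq_nonneg _) (pp_nonneg hμ k)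
        linarith
    _ = μ / d^2 := by ring






lemma cdf_tendsto_one {t ε : ℝ} (ht : 0 ≤ t) (hε : 0 < ε) (c : ℝ → ℕ)
    (hc : ∀ᶠ lam in atTop, lam * t + lam * ε ≤ ((c lam : ℕ) : ℝ)) :
    Tendsto (fun lam => ∑ k ∈ Finset.range (c lam), pp (lam * t) k) atTop (nhds 1) := by
  apply tendsto_of_tendsto_of_tendsto_of_le_of_le'
    (g := fun lam : ℝ => 1 - (t/ε^2) * (1/lam)) (h := fun _ => (1:ℝ))
  · have h0 : Tendsto (fun lam : ℝ => (t/ε^2) * (1/lam)) atTop (nhds 0) := by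
      simpa using (tendsto_inv_atTop_zero.const_mul (t/ε^2))
    simpa using (tendsto_const_nhds (x := (1:ℝ)) (f := atTop)).sub h0
  · exact tendsto_const_nhds
  · filter_upwards [hc, eventually_gt_atTop 0] with lam hlam hl
    have hμ : 0 ≤ lam * t := mul_nonneg hl.le ht
    have hd : 0 < lam * ε := mul_pos hl hε
    have hb := tail_bound hμ hd (c lam) (by linarith)
    have heq : (lam*t) / (lam*ε)^2 = (t/ε^2) * (1/lam) := by
      field_simp
    rw [heq] at hb
    linarith
  · filter_upwards [eventually_gt_atTop 0] with lam hl
    exact cdf_le_one (mul_nonneg hl.le ht) _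

/-- For `N_λ ~ Poisson(tλ)` and `x ≠ t`,
`φ^A_{λ,t}(x) = E[((⌊λx⌋ − N_λ + 1)/λ)·1{N_λ < λx}] → (x − t)·1{x > t}` as `λ → ∞`. -/
theorem stmt_12 (t x : ℝ) (ht : 0 ≤ t) (hx : 0 ≤ x) (hxt : x ≠ t) :
    Filter.Tendsto
      (fun lam : ℝ =>
        ∑' k : ℕ, if (k : ℝ) < lam * x then
          (((⌊lam * x⌋ : ℝ) - (k : ℝ) + 1) / lam) *
            (Real.exp (-(lam * t)) * (lam * t) ^ k / (Nat.factorial k : ℝ)) else 0)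
      Filter.atTop (nhds ((x - t) * (if t < x then (1 : ℝ) else 0))) := by
  -- rewrite tsum as finite sum
  have hS : ∀ lam : ℝ, 0 < lam →
      (∑' k : ℕ, if (k : ℝ) < lam * x then
          (((⌊lam * x⌋ : ℝ) - (k : ℝ) + 1) / lam) *
            (Real.exp (-(lam * t)) * (lam * t) ^ k / (Nat.factorial k : ℝ)) else 0)
      = ∑ k ∈ Finset.range ((⌈lam*x⌉).toNat),
          (((⌊lam*x⌋:ℝ) - (k:ℝ) + 1)/lam) * pp (lam*t) k := by
    intro lam hlam
    have hc0 : (0:ℤ) ≤ ⌈lam*x⌉ := Int.ceil_nonneg (mul_nonneg hlam.le hx)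
    rw [tsum_eq_sum (s := Finset.range ((⌈lam*x⌉).toNat)) ?_]
    · apply Finset.sum_congr rfl
      intro k hk
      rw [Finset.mem_range] at hk
      have hkz : (k:ℤ) < ⌈lam*x⌉ := Int.lt_toNat.mp hk
      have hkx : (k:ℝ) < lam * x := Int.lt_ceil.mp hkz
      rw [if_pos hkx]
      rfl
    · intro k hk
      rw [Finset.mem_range, not_lt] at hk
      have hnk : ¬ ((k:ℝ) < lam * x) := by
        push_neg
        have h1 : lam * x ≤ (((⌈lam*x⌉).toNat : ℕ):ℝ) := by
          have := Int.le_ceil (lam*x)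
          have h2 : ((⌈lam*x⌉ : ℤ):ℝ) = (((⌈lam*x⌉).toNat : ℕ):ℝ) := by
            exact_mod_cast (Int.toNat_of_nonneg hc0).symm
          linarith [h2 ▸ this]
        calc lam * x ≤ (((⌈lam*x⌉).toNat : ℕ):ℝ) := h1
          _ ≤ (k:ℝ) := Nat.cast_le.mpr hk
      rw [if_neg hnk]
  rcases lt_or_gt_of_ne hxt with hlt | hgt
  · -- x < t : limit 0
    rw [if_neg (not_lt.mpr hlt.le)]
    rw [mul_zero]
    have htpos : 0 < t := lt_of_le_of_lt hx hlt
    apply tendsto_of_tendsto_of_tendsto_of_le_of_le'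
      (g := fun _ : ℝ => (0:ℝ)) (h := fun lam : ℝ => ((x+1) * t/(t-x)^2) * (1/lam))
    · exact tendsto_const_nhds
    · have h0 := tendsto_inv_atTop_zero.const_mul ((x+1) * t/(t-x)^2)
      rw [mul_zero] at h0
      simpa [one_div] using h0
    · -- 0 ≤ S
      filter_upwards [eventually_gt_atTop 0] with lam hl
      rw [hS lam hl]
      apply Finset.sum_nonneg
      intro k hk
      rw [Finset.mem_range] at hk
      have hkx : (k:ℝ) < lam * x := Int.lt_ceil.mp (Int.lt_toNat.mp hk)
      have hkm : (k:ℝ) ≤ ((⌊lam*x⌋:ℤ):ℝ) := by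
        exact_mod_cast Int.le_floor.mpr (by exact_mod_cast hkx.le)
      have : (0:ℝ) ≤ ((⌊lam*x⌋:ℝ) - k + 1)/lam := by
        apply div_nonneg _ hl.le
        linarith
      exact mul_nonneg this (pp_nonneg (mul_nonneg hl.le ht) k)
    · -- S ≤ bound
      filter_upwards [eventually_ge_atTop 1] with lam hl
      have hl0 : (0:ℝ) < lam := lt_of_lt_of_le one_pos hl
      rw [hS lam hl0]
      have hμ : 0 ≤ lam * t := mul_nonneg hl0.le ht
      have hd : 0 < lam * (t - x) := mul_pos hl0 (by linarith)
      have hhead := head_bound hμ hd ((⌈lam*x⌉).toNat) ?hcond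
      case hcond =>
        intro k hk
        rw [Finset.mem_range] at hk
        have hkx : (k:ℝ) < lam * x := Int.lt_ceil.mp (Int.lt_toNat.mp hk)
        have : lam * t - lam * (t-x) = lam * x := by ring
        linarith
      -- each coefficient ≤ (x+1)
      have hcoef : ∀ k ∈ Finset.range ((⌈lam*x⌉).toNat),
          (((⌊lam*x⌋:ℝ) - (k:ℝ) + 1)/lam) * pp (lam*t) k ≤ (x+1) * pp (lam*t) k := by
        intro k hk
        apply mul_le_mul_of_nonneg_right _ (pp_nonneg hμ k)
        rw [div_le_iff₀ hl0]
        have hfl : (⌊lam*x⌋:ℝ) ≤ lam * x := Int.floor_le _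
        have hk0 : (0:ℝ) ≤ (k:ℝ) := Nat.cast_nonneg k
        nlinarith
      calc ∑ k ∈ Finset.range ((⌈lam*x⌉).toNat), (((⌊lam*x⌋:ℝ) - (k:ℝ) + 1)/lam) * pp (lam*t) k
          ≤ ∑ k ∈ Finset.range ((⌈lam*x⌉).toNat), (x+1) * pp (lam*t) k := Finset.sum_le_sum hcoef
        _ = (x+1) * ∑ k ∈ Finset.range ((⌈lam*x⌉).toNat), pp (lam*t) k := by rw [Finset.mul_sum]
        _ ≤ (x+1) * ((lam*t) / (lam*(t-x))^2) := by
            apply mul_le_mul_of_nonneg_left hhead (by linarith)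
        _ = ((x+1) * t/(t-x)^2) * (1/lam) := by
            have h1 : (t-x) ≠ 0 := by intro h; apply absurd hlt; linarith
            have h2 : lam ≠ 0 := ne_of_gt hl0
            field_simp
  · -- x > t
    rw [if_pos hgt, mul_one]
    have hx0 : 0 < x := lt_of_le_of_lt ht hgt
    have hceil : ∀ lam : ℝ, 0 < lam → lam * x ≤ (((⌈lam*x⌉).toNat : ℕ) : ℝ) := by
      intro lam hl
      have hc0 : (0:ℤ) ≤ ⌈lam*x⌉ := Int.ceil_nonneg (mul_nonneg hl.le hx)
      have h2 : ((⌈lam*x⌉ : ℤ):ℝ) = (((⌈lam*x⌉).toNat : ℕ):ℝ) := by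
        exact_mod_cast (Int.toNat_of_nonneg hc0).symm
      linarith [Int.le_ceil (lam*x), h2 ▸ Int.le_ceil (lam*x)]
    have hA : Tendsto (fun lam => ∑ k ∈ Finset.range ((⌈lam*x⌉).toNat), pp (lam*t) k)
        atTop (nhds 1) := by
      apply cdf_tendsto_one ht (by linarith : (0:ℝ) < x - t)
      filter_upwards [eventually_gt_atTop 0] with lam hl
      have := hceil lam hl
      nlinarith
    have hA' : Tendsto (fun lam => ∑ k ∈ Finset.range ((⌈lam*x⌉).toNat - 1), pp (lam*t) k)
        atTop (nhds 1) := by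
      apply cdf_tendsto_one ht (by linarith : (0:ℝ) < (x - t)/2)
      filter_upwards [eventually_ge_atTop (2/(x-t)), eventually_gt_atTop 0] with lam h2 hl
      have hxt2 : (0:ℝ) < x - t := by linarith
      have h2' : 2 ≤ lam * (x-t) := by
        rw [div_le_iff₀ hxt2] at h2
        linarith [h2]
      have hc := hceil lam hl
      have hn1 : 1 ≤ (⌈lam*x⌉).toNat := by
        by_contra hcon
        push_neg at hcon
        interval_cases h : (⌈lam*x⌉).toNat
        · norm_num at hc
          nlinarith
      have hcast : (((⌈lam*x⌉).toNat - 1 : ℕ) : ℝ) = (((⌈lam*x⌉).toNat : ℕ) : ℝ) - 1 := by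
        push_cast [Nat.cast_sub hn1]
        ring
      rw [hcast]
      nlinarith
    have h1 : Tendsto (fun lam : ℝ => ((⌊lam*x⌋:ℝ)+1)/lam) atTop (nhds x) := by
      apply tendsto_of_tendsto_of_tendsto_of_le_of_le'
        (g := fun _ : ℝ => x) (h := fun lam : ℝ => x + 1/lam)
      · exact tendsto_const_nhds
      · have h0 := tendsto_inv_atTop_zero (𝕜 := ℝ)
        have := (tendsto_const_nhds (x := x) (f := atTop (α := ℝ))).add h0
        rw [add_zero] at this
        simpa [one_div] using this
      · filter_upwards [eventually_gt_atTop 0] with lam hl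
        have := Int.lt_floor_add_one (lam*x)
        rw [le_div_iff₀ hl]
        nlinarith
      · filter_upwards [eventually_gt_atTop 0] with lam hl
        have := Int.floor_le (lam*x)
        have hfl : (0:ℝ) ≤ lam*x := mul_nonneg hl.le hx
        rw [div_le_iff₀ hl]
        have hexp : (x + 1/lam)*lam = lam * x + 1 := by field_simp
        rw [hexp]
        linarith
    have hcomb := (h1.mul hA).sub (hA'.const_mul t)
    rw [mul_one, mul_one] at hcomb
    apply hcomb.congr'
    filter_upwards [eventually_gt_atTop 0, eventually_ge_atTop (1/x)] with lam hl hlx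
    have hlx1 : 1 ≤ lam * x := by
      rw [div_le_iff₀ hx0] at hlx
      linarith
    have hc := hceil lam hl
    have hn1 : 1 ≤ (⌈lam*x⌉).toNat := by
      by_contra hcon
      push_neg at hcon
      interval_cases h : (⌈lam*x⌉).toNat
      · norm_num at hc
        nlinarith
    rw [hS lam hl]
    obtain ⟨n', hn'⟩ : ∃ n', (⌈lam*x⌉).toNat = n' + 1 :=
      ⟨(⌈lam*x⌉).toNat - 1, (Nat.succ_pred_eq_of_pos hn1).symm⟩
    rw [hn']
    have hsplit : ∀ k : ℕ, (((⌊lam*x⌋:ℝ) - (k:ℝ) + 1)/lam) * pp (lam*t) k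
        = (((⌊lam*x⌋:ℝ)+1)/lam) * pp (lam*t) k - (1/lam) * ((k:ℝ) * pp (lam*t) k) := by
      intro k
      field_simp
      ring
    rw [Finset.sum_congr rfl (fun k _ => hsplit k), Finset.sum_sub_distrib,
      ← Finset.mul_sum, ← Finset.mul_sum]
    have hB : ∑ k ∈ Finset.range (n'+1), (k:ℝ) * pp (lam*t) k
        = (lam*t) * ∑ k ∈ Finset.range n', pp (lam*t) k := by
      rw [Finset.sum_range_succ']
      simp only [Nat.cast_zero, zero_mul, add_zero]
      rw [Finset.mul_sum]
      apply Finset.sum_congr rfl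
      intro k _
      have := pp_succ (lam*t) k
      push_cast
      linarith [this]
    rw [hB]
    simp only [Nat.add_sub_cancel]
    have hlam0 : lam ≠ 0 := ne_of_gt hl
    field_simp
end
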